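/- Let (G₁,y₁),…,(G_s,y_s) ∈ 𝒢_n × {0,1} be a graph sample that is linearly separable in the 1-WLOA feature space with margin γ. If min over all pairs i,j with y_i ≠ y_j of (‖φ^{(T)}_{WLOA,𝓕}(G_i) − φ^{(T)}_{WLOA,𝓕}(G_j)‖² − ‖φ^{(T)}_WLOA(G_i) − φ^{(T)}_WLOA(G_j)‖²) is strictly larger than max over all pairs with y_i = y_j of the same quantity — i.e., the minimum increase of squared distances between classes strictly exceeds the maximum increase of squared distances within classes — then the margin strictly increases when 𝓕 is used: the sample is linearly separable in the 1-WLOA_𝓕 feature space with margin strictly larger than γ. -/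

import Mathlib

open scoped Classical

noncomputable section

/-- The type of 1-WL colors after `t` rounds, with initial colors in `A`.  A color at round
`t+1` is the pair of the color at round `t` together with the multiset of the neighbors'
colors at round `t`; this encodes the colorings of the Weisfeiler--Leman algorithm up to the
injective renaming `RELABEL`. -/
def WLColor (A : Type) : ℕ → Type :=
  fun t => Nat.rec A (fun _ C => C × Multiset C) t

/-- The 1-WL coloring after `t` rounds of a finite graph `G` with initial labeling `lab`:
`C_0 := lab` and `C_{t+1}(v) := (C_t(v), {{C_t(u) : u ∈ N(v)}})`. -/
def wlColoring {V A : Type} [Fintype V] (G : SimpleGraph V) (lab : V → A) :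
    (t : ℕ) → V → WLColor A t :=
  fun t => Nat.rec (motive := fun t => V → WLColor A t) lab
    (fun _ ih v => (ih v, ((Finset.univ.filter fun u => G.Adj v u).val.map ih))) t

/-- The number of vertices of `G` having 1-WL color `c` at round `t`
(an entry of the WL feature vector `φ_t(G)`). -/
def wlCount {V A : Type} [Fintype V] (G : SimpleGraph V) (lab : V → A) (t : ℕ)
    (c : WLColor A t) : ℕ :=
  (Finset.univ.filter fun v => wlColoring G lab t v = c).card

/-- The set `Σ_t` of colors appearing in `G` at round `t`. -/
def wlColors {V A : Type} [Fintype V] (G : SimpleGraph V) (lab : V → A) (t : ℕ) :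
    Finset (WLColor A t) :=
  Finset.univ.image (wlColoring G lab t)

/-- The constant labeling of an unlabeled graph. -/
def unlab {V : Type} : V → ℕ := fun _ => 0

/-- A bundled finite graph. -/
structure FinGraph where
  n : ℕ
  adj : SimpleGraph (Fin n)

/-- `v` is contained in a vertex subset `X` of `G` such that the induced subgraph `G[X]`
is isomorphic to `F`. -/
def inSubCopy {V : Type} (G : SimpleGraph V) (F : FinGraph) (v : V) : Prop :=
  ∃ X : Finset V, v ∈ X ∧ Nonempty (G.induce (X : Set V) ≃g F.adj)

/-- The initial labeling `ℓ_𝓕` of the `1`-WL_𝓕 algorithm: two vertices get the same label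
iff they agree, for every `F ∈ 𝓕`, on containment in a vertex subset inducing a subgraph
isomorphic to `F`. -/
def ellF {V : Type} (G : SimpleGraph V) (FF : Finset FinGraph) : V → Set FinGraph :=
  fun v => {F | F ∈ FF ∧ inSubCopy G F v}

/-- All 1-WL colors occurring at round `t` in some `n`-order graph. -/
def usedColors (n t : ℕ) : Finset (WLColor ℕ t) :=
  Finset.univ.image fun p : SimpleGraph (Fin n) × Fin n => wlColoring p.1 unlab t p.2

/-- The index set of the 1-WLOA feature vectors of `n`-order graphs after `T` rounds: a
coordinate for every round `t ≤ T`, every color that can occur at round `t` and every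
`j ∈ [n]`. -/
abbrev WloaIdx (n T : ℕ) :=
  (t : Fin (T + 1)) × {c : WLColor ℕ t.val // c ∈ usedColors n t.val} × Fin n

/-- The 1-WLOA feature vector `φ^{(T)}_WLOA(G)` of an `n`-order graph `G`: the `(t, c, j)`
entry is `1` iff at least `j` vertices of `G` have color `c` at round `t` (a unary encoding
of the color counts). -/
def featWLOA (n T : ℕ) (G : SimpleGraph (Fin n)) : EuclideanSpace ℝ (WloaIdx n T) :=
  WithLp.toLp 2 fun p => if p.2.2.val + 1 ≤ wlCount G unlab p.1.val p.2.1.val then 1 else 0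

/-- The normalized 1-WLOA feature vector `φ̄^{(T)}_WLOA(G)`. -/
def featWLOAn (n T : ℕ) (G : SimpleGraph (Fin n)) : EuclideanSpace ℝ (WloaIdx n T) :=
  ‖featWLOA n T G‖⁻¹ • featWLOA n T G

/-- All 1-WL_𝓕 colors occurring at round `t` in some `n`-order graph. -/
def usedColorsF (n : ℕ) (FF : Finset FinGraph) (t : ℕ) :
    Finset (WLColor (Set FinGraph) t) :=
  Finset.univ.image fun p : SimpleGraph (Fin n) × Fin n =>
    wlColoring p.1 (ellF p.1 FF) t p.2

/-- The index set of the 1-WL_𝓕 feature vectors of `n`-order graphs after `T` rounds. -/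
abbrev ColIdxF (n : ℕ) (FF : Finset FinGraph) (T : ℕ) :=
  (t : Fin (T + 1)) × {c : WLColor (Set FinGraph) t.val // c ∈ usedColorsF n FF t.val}

/-- The 1-WL_𝓕 feature vector `φ^{(T)}_{WL,𝓕}(G)` of an `n`-order graph `G`. -/
def featWLF (n : ℕ) (FF : Finset FinGraph) (T : ℕ) (G : SimpleGraph (Fin n)) :
    EuclideanSpace ℝ (ColIdxF n FF T) :=
  WithLp.toLp 2 fun p => (wlCount G (ellF G FF) p.1.val p.2.val : ℝ)

/-- The normalized 1-WL_𝓕 feature vector `φ̄^{(T)}_{WL,𝓕}(G)`. -/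
def featWLFn (n : ℕ) (FF : Finset FinGraph) (T : ℕ) (G : SimpleGraph (Fin n)) :
    EuclideanSpace ℝ (ColIdxF n FF T) :=
  ‖featWLF n FF T G‖⁻¹ • featWLF n FF T G

/-- The index set of the 1-WLOA_𝓕 feature vectors of `n`-order graphs after `T` rounds. -/
abbrev WloaIdxF (n : ℕ) (FF : Finset FinGraph) (T : ℕ) :=
  (t : Fin (T + 1)) ×
    {c : WLColor (Set FinGraph) t.val // c ∈ usedColorsF n FF t.val} × Fin n

/-- The 1-WLOA_𝓕 feature vector `φ^{(T)}_{WLOA,𝓕}(G)` of an `n`-order graph `G`. -/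
def featWLOAF (n : ℕ) (FF : Finset FinGraph) (T : ℕ) (G : SimpleGraph (Fin n)) :
    EuclideanSpace ℝ (WloaIdxF n FF T) :=
  WithLp.toLp 2 fun p => if p.2.2.val + 1 ≤ wlCount G (ellF G FF) p.1.val p.2.1.val then 1 else 0

section AuxMargin

open Finset
open scoped RealInnerProductSpace

lemma hull_weights' {E : Type*} [AddCommGroup E] [Module ℝ E] {s : ℕ}
    (f : Fin s → E) (S : Set (Fin s)) {p : E} (hp : p ∈ convexHull ℝ (f '' S)) :
    ∃ w : Fin s → ℝ, (∀ i, 0 ≤ w i) ∧ (∀ i, w i ≠ 0 → i ∈ S) ∧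
      ∑ i, w i = 1 ∧ ∑ i, w i • f i = p := by
  rw [mem_convexHull_iff_exists_fintype] at hp
  obtain ⟨ι, _, w, z, hw0, hw1, hz, hzp⟩ := hp
  have hσ : ∀ k : ι, ∃ j : Fin s, j ∈ S ∧ f j = z k := by
    intro k; obtain ⟨j, hj, hfj⟩ := hz k; exact ⟨j, hj, hfj⟩
  choose σ hσS hσf using hσ
  refine ⟨fun j => ∑ k ∈ univ.filter (fun k => σ k = j), w k, ?_, ?_, ?_, ?_⟩
  · intro j; exact Finset.sum_nonneg fun k _ => hw0 k
  · intro j hj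
    obtain ⟨k, hk⟩ := Finset.nonempty_of_sum_ne_zero hj
    rw [Finset.mem_filter] at hk
    exact hk.2 ▸ hσS k
  · rw [Finset.sum_fiberwise]; exact hw1
  · rw [← hzp, ← Finset.sum_fiberwise (g := σ) (f := fun k => w k • z k)]
    refine Finset.sum_congr rfl fun j _ => ?_
    rw [Finset.sum_smul]
    refine Finset.sum_congr rfl fun k hk => ?_
    rw [Finset.mem_filter] at hk
    rw [← hk.2, hσf]

lemma combo_mem_hull' {E : Type*} [AddCommGroup E] [Module ℝ E] {s : ℕ}
    (f : Fin s → E) (S : Set (Fin s)) (w : Fin s → ℝ) (h0 : ∀ i, 0 ≤ w i)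
    (hS : ∀ i, w i ≠ 0 → i ∈ S) (h1 : ∑ i, w i = 1) :
    (∑ i, w i • f i) ∈ convexHull ℝ (f '' S) := by
  set t : Finset (Fin s) := univ.filter (fun i => w i ≠ 0) with ht
  have hsum : ∑ i ∈ t, w i = 1 := by
    rw [← h1]
    refine Finset.sum_subset (Finset.filter_subset _ _) ?_
    intro i _ hi
    simp only [ht, Finset.mem_filter, Finset.mem_univ, true_and, not_not] at hi
    exact hi
  have heq : ∑ i, w i • f i = ∑ i ∈ t, w i • f i := by
    refine (Finset.sum_subset (Finset.filter_subset _ _) ?_).symm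
    intro i _ hi
    simp only [ht, Finset.mem_filter, Finset.mem_univ, true_and, not_not] at hi
    rw [hi, zero_smul]
  rw [heq, ← Finset.centerMass_eq_of_sum_1 _ _ hsum]
  refine Finset.centerMass_mem_convexHull _ (fun i _ => h0 i) (hsum ▸ one_pos) ?_
  intro i hi
  simp only [ht, Finset.mem_filter] at hi
  exact Set.mem_image_of_mem f (hS i hi.2)

lemma combo_dist_sq' {E : Type*} [NormedAddCommGroup E] [InnerProductSpace ℝ E]
    {ι : Type*} [Fintype ι] (z : ι → E) (a b : ι → ℝ)
    (ha : ∑ i, a i = 1) (hb : ∑ i, b i = 1) :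
    ‖(∑ i, a i • z i) - ∑ i, b i • z i‖ ^ 2 =
      (∑ i, ∑ j, a i * b j * ‖z i - z j‖ ^ 2)
        - (1/2) * (∑ i, ∑ j, a i * a j * ‖z i - z j‖ ^ 2)
        - (1/2) * (∑ i, ∑ j, b i * b j * ‖z i - z j‖ ^ 2) := by
  have hib : ∀ c d : ι → ℝ, (⟪(∑ i, c i • z i), (∑ j, d j • z j)⟫) =
      ∑ i, ∑ j, c i * d j * ⟪z i, z j⟫ := by
    intro c d
    rw [sum_inner]
    refine Finset.sum_congr rfl fun i _ => ?_
    rw [inner_sum]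
    refine Finset.sum_congr rfl fun j _ => ?_
    rw [real_inner_smul_left, real_inner_smul_right]; ring
  have hsingleL : ∀ (g c d : ι → ℝ), (∑ j, d j = 1) →
      ∑ i, ∑ j, c i * d j * g i = ∑ i, c i * g i := by
    intro g c d hd
    refine Finset.sum_congr rfl fun i _ => ?_
    calc ∑ j, c i * d j * g i = ∑ j, (c i * g i) * d j :=
          Finset.sum_congr rfl fun j _ => by ring
      _ = (c i * g i) * ∑ j, d j := by rw [Finset.mul_sum]
      _ = c i * g i := by rw [hd, mul_one]
  have hsingleR : ∀ (g c d : ι → ℝ), (∑ i, c i = 1) →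
      ∑ i, ∑ j, c i * d j * g j = ∑ j, d j * g j := by
    intro g c d hc
    rw [Finset.sum_comm]
    calc ∑ j, ∑ i, c i * d j * g j
        = ∑ j, ∑ i, d j * c i * g j := by
          refine Finset.sum_congr rfl fun j _ => Finset.sum_congr rfl fun i _ => by ring
      _ = ∑ j, d j * g j := hsingleL g d c hc
  have hexp : ∀ c d : ι → ℝ, (∑ i, c i = 1) → (∑ j, d j = 1) →
      (∑ i, ∑ j, c i * d j * ‖z i - z j‖ ^ 2) =
        (∑ i, c i * ⟪z i, z i⟫) + (∑ j, d j * ⟪z j, z j⟫)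
          - 2 * ∑ i, ∑ j, c i * d j * ⟪z i, z j⟫ := by
    intro c d hc hd
    have hterm : ∀ i j : ι, c i * d j * ‖z i - z j‖ ^ 2 =
        c i * d j * ⟪z i, z i⟫ + c i * d j * ⟪z j, z j⟫
          - 2 * (c i * d j * ⟪z i, z j⟫) := by
      intro i j
      rw [norm_sub_sq_real, ← real_inner_self_eq_norm_sq, ← real_inner_self_eq_norm_sq]
      ring
    calc ∑ i, ∑ j, c i * d j * ‖z i - z j‖ ^ 2
        = ∑ i, ((∑ j, c i * d j * ⟪z i, z i⟫) + (∑ j, c i * d j * ⟪z j, z j⟫)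
            - ∑ j, 2 * (c i * d j * ⟪z i, z j⟫)) := by
          refine Finset.sum_congr rfl fun i _ => ?_
          rw [← Finset.sum_add_distrib, ← Finset.sum_sub_distrib]
          exact Finset.sum_congr rfl fun j _ => hterm i j
      _ = (∑ i, ∑ j, c i * d j * ⟪z i, z i⟫) + (∑ i, ∑ j, c i * d j * ⟪z j, z j⟫)
            - ∑ i, ∑ j, 2 * (c i * d j * ⟪z i, z j⟫) := by
          rw [← Finset.sum_add_distrib, ← Finset.sum_sub_distrib]
      _ = (∑ i, c i * ⟪z i, z i⟫) + (∑ j, d j * ⟪z j, z j⟫)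
          - 2 * ∑ i, ∑ j, c i * d j * ⟪z i, z j⟫ := by
          rw [hsingleL (fun i => ⟪z i, z i⟫) c d hd,
            hsingleR (fun j => ⟪z j, z j⟫) c d hc]
          congr 1
          rw [Finset.mul_sum]
          exact Finset.sum_congr rfl fun i _ => by rw [Finset.mul_sum]
  rw [norm_sub_sq_real, ← real_inner_self_eq_norm_sq, ← real_inner_self_eq_norm_sq,
    hib a a, hib a b, hib b b, hexp a b ha hb, hexp a a ha ha, hexp b b hb hb]
  ring

lemma double_sum_const' {ι : Type*} [Fintype ι] (c d : ι → ℝ)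
    (hc : ∑ i, c i = 1) (hd : ∑ i, d i = 1) (r : ℝ) :
    ∑ i, ∑ j, c i * d j * r = r := by
  calc ∑ i, ∑ j, c i * d j * r = ∑ i : ι, c i * r := by
        refine Finset.sum_congr rfl fun i _ => ?_
        calc ∑ j, c i * d j * r = ∑ j, (c i * r) * d j :=
              Finset.sum_congr rfl fun j _ => by ring
          _ = (c i * r) * ∑ j, d j := by rw [Finset.mul_sum]
          _ = c i * r := by rw [hd, mul_one]
    _ = (∑ i, c i) * r := by rw [Finset.sum_mul]
    _ = r := by rw [hc, one_mul]

lemma core_margin {E F : Type*} [NormedAddCommGroup E] [InnerProductSpace ℝ E]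
    [NormedAddCommGroup F] [InnerProductSpace ℝ F]
    (s : ℕ) (xf : Fin s → E) (zf : Fin s → F) (y : Fin s → Bool) (γ : ℝ) (hγ : 0 < γ)
    (hsep : ∀ p ∈ convexHull ℝ (xf '' {i | y i = true}),
      ∀ q ∈ convexHull ℝ (xf '' {i | y i = false}), 2 * γ ≤ dist p q)
    (hcond : ∀ i j k l : Fin s, y i ≠ y j → y k = y l →
      dist (zf k) (zf l) ^ 2 - dist (xf k) (xf l) ^ 2 <
        dist (zf i) (zf j) ^ 2 - dist (xf i) (xf j) ^ 2) :
    ∃ γ' : ℝ, γ < γ' ∧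
      ∀ p ∈ convexHull ℝ (zf '' {i | y i = true}),
        ∀ q ∈ convexHull ℝ (zf '' {i | y i = false}), 2 * γ' ≤ dist p q := by
  by_cases hTt : ({i | y i = true} : Set (Fin s)).Nonempty
  swap
  · refine ⟨γ + 1, by linarith, fun p hp q hq => ?_⟩
    rw [Set.not_nonempty_iff_eq_empty] at hTt
    rw [hTt] at hp
    simp at hp
  by_cases hTf : ({i | y i = false} : Set (Fin s)).Nonempty
  swap
  · refine ⟨γ + 1, by linarith, fun p hp q hq => ?_⟩
    rw [Set.not_nonempty_iff_eq_empty] at hTf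
    rw [hTf] at hq
    simp at hq
  obtain ⟨i0, hi0⟩ := hTt
  obtain ⟨j0, hj0⟩ := hTf
  simp only [Set.mem_setOf_eq] at hi0 hj0
  set Δ : Fin s × Fin s → ℝ :=
    fun p => dist (zf p.1) (zf p.2) ^ 2 - dist (xf p.1) (xf p.2) ^ 2 with hΔ
  set C : Finset (Fin s × Fin s) := univ.filter (fun p => y p.1 ≠ y p.2) with hC
  set Sm : Finset (Fin s × Fin s) := univ.filter (fun p => y p.1 = y p.2) with hSm
  have hCne : C.Nonempty := ⟨(i0, j0), by simp [hC, hi0, hj0]⟩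
  have hSne : Sm.Nonempty := ⟨(i0, i0), by simp [hSm]⟩
  set m : ℝ := C.inf' hCne Δ with hm
  set M : ℝ := Sm.sup' hSne Δ with hM
  have hMm : M < m := by
    rw [hM, Finset.sup'_lt_iff]
    intro p hp
    rw [hm, Finset.lt_inf'_iff]
    intro q hq
    rw [hC, Finset.mem_filter] at hq
    rw [hSm, Finset.mem_filter] at hp
    exact hcond q.1 q.2 p.1 p.2 hq.2 hp.2
  have hM0 : 0 ≤ M := by
    have h1 : Δ (i0, i0) ≤ M := Finset.le_sup' Δ (by simp [hSm])
    have h2 : Δ (i0, i0) = 0 := by simp [hΔ]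
    linarith
  have hx0 : (0:ℝ) ≤ 4 * γ ^ 2 + (m - M) := by nlinarith
  refine ⟨Real.sqrt (4 * γ ^ 2 + (m - M)) / 2, ?_, ?_⟩
  · have : 2 * γ < Real.sqrt (4 * γ ^ 2 + (m - M)) := by
      rw [show (2:ℝ) * γ = Real.sqrt ((2*γ)^2) by
        rw [Real.sqrt_sq (by linarith)]]
      apply Real.sqrt_lt_sqrt (by positivity)
      nlinarith
    linarith
  intro p hp q hq
  obtain ⟨a, ha0, haS, ha1, hap⟩ := hull_weights' zf _ hp
  obtain ⟨b, hb0, hbS, hb1, hbq⟩ := hull_weights' zf _ hq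
  have hpx := combo_mem_hull' xf _ a ha0 haS ha1
  have hqx := combo_mem_hull' xf _ b hb0 hbS hb1
  have hsepx : 2 * γ ≤ dist (∑ i, a i • xf i) (∑ i, b i • xf i) := hsep _ hpx _ hqx
  have hz : dist p q ^ 2 =
      (∑ i, ∑ j, a i * b j * ‖zf i - zf j‖ ^ 2)
        - (1/2) * (∑ i, ∑ j, a i * a j * ‖zf i - zf j‖ ^ 2)
        - (1/2) * (∑ i, ∑ j, b i * b j * ‖zf i - zf j‖ ^ 2) := by
    rw [← hap, ← hbq, dist_eq_norm]
    exact combo_dist_sq' zf a b ha1 hb1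
  have hxeq : dist (∑ i, a i • xf i) (∑ i, b i • xf i) ^ 2 =
      (∑ i, ∑ j, a i * b j * ‖xf i - xf j‖ ^ 2)
        - (1/2) * (∑ i, ∑ j, a i * a j * ‖xf i - xf j‖ ^ 2)
        - (1/2) * (∑ i, ∑ j, b i * b j * ‖xf i - xf j‖ ^ 2) := by
    rw [dist_eq_norm]
    exact combo_dist_sq' xf a b ha1 hb1
  have hcross : (∑ i, ∑ j, a i * b j * (‖xf i - xf j‖ ^ 2 + m)) ≤
      ∑ i, ∑ j, a i * b j * ‖zf i - zf j‖ ^ 2 := by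
    refine Finset.sum_le_sum fun i _ => Finset.sum_le_sum fun j _ => ?_
    rcases eq_or_ne (a i) 0 with h | h
    · simp [h]
    rcases eq_or_ne (b j) 0 with h' | h'
    · simp [h']
    have hyi := haS i h
    have hyj := hbS j h'
    simp only [Set.mem_setOf_eq] at hyi hyj
    have hmem : (i, j) ∈ C := by simp [hC, hyi, hyj]
    have hmle : m ≤ Δ (i, j) := Finset.inf'_le Δ hmem
    have : ‖xf i - xf j‖ ^ 2 + m ≤ ‖zf i - zf j‖ ^ 2 := by
      simp only [hΔ, dist_eq_norm] at hmle
      linarith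
    exact mul_le_mul_of_nonneg_left this (mul_nonneg (ha0 i) (hb0 j))
  have hcross' : (∑ i, ∑ j, a i * b j * ‖xf i - xf j‖ ^ 2) + m ≤
      ∑ i, ∑ j, a i * b j * ‖zf i - zf j‖ ^ 2 := by
    have hsplit : (∑ i, ∑ j, a i * b j * (‖xf i - xf j‖ ^ 2 + m)) =
        (∑ i, ∑ j, a i * b j * ‖xf i - xf j‖ ^ 2) + ∑ i, ∑ j, a i * b j * m := by
      rw [← Finset.sum_add_distrib]
      refine Finset.sum_congr rfl fun i _ => ?_
      rw [← Finset.sum_add_distrib]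
      exact Finset.sum_congr rfl fun j _ => by ring
    rw [hsplit, double_sum_const' a b ha1 hb1 m] at hcross
    exact hcross
  have hwith : ∀ (c : Fin s → ℝ), (∀ i, 0 ≤ c i) → (∑ i, c i = 1) →
      (∀ i, c i ≠ 0 → ∀ j, c j ≠ 0 → y i = y j) →
      (∑ i, ∑ j, c i * c j * ‖zf i - zf j‖ ^ 2) ≤
        (∑ i, ∑ j, c i * c j * ‖xf i - xf j‖ ^ 2) + M := by
    intro c hc0 hc1 hcy
    have h1 : (∑ i, ∑ j, c i * c j * ‖zf i - zf j‖ ^ 2) ≤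
        ∑ i, ∑ j, c i * c j * (‖xf i - xf j‖ ^ 2 + M) := by
      refine Finset.sum_le_sum fun i _ => Finset.sum_le_sum fun j _ => ?_
      rcases eq_or_ne (c i) 0 with h | h
      · simp [h]
      rcases eq_or_ne (c j) 0 with h' | h'
      · simp [h']
      have hmem : (i, j) ∈ Sm := by simp [hSm, hcy i h j h']
      have hMle : Δ (i, j) ≤ M := Finset.le_sup' Δ hmem
      have : ‖zf i - zf j‖ ^ 2 ≤ ‖xf i - xf j‖ ^ 2 + M := by
        simp only [hΔ, dist_eq_norm] at hMle
        linarith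
      exact mul_le_mul_of_nonneg_left this (mul_nonneg (hc0 i) (hc0 j))
    have hsplit : (∑ i, ∑ j, c i * c j * (‖xf i - xf j‖ ^ 2 + M)) =
        (∑ i, ∑ j, c i * c j * ‖xf i - xf j‖ ^ 2) + ∑ i, ∑ j, c i * c j * M := by
      rw [← Finset.sum_add_distrib]
      refine Finset.sum_congr rfl fun i _ => ?_
      rw [← Finset.sum_add_distrib]
      exact Finset.sum_congr rfl fun j _ => by ring
    rw [hsplit, double_sum_const' c c hc1 hc1 M] at h1
    exact h1
  have haa := hwith a ha0 ha1 (fun i hi j hj => by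
    have h1 := haS i hi; have h2 := haS j hj
    simp only [Set.mem_setOf_eq] at h1 h2; rw [h1, h2])
  have hbb := hwith b hb0 hb1 (fun i hi j hj => by
    have h1 := hbS i hi; have h2 := hbS j hj
    simp only [Set.mem_setOf_eq] at h1 h2; rw [h1, h2])
  have hfinal : dist (∑ i, a i • xf i) (∑ i, b i • xf i) ^ 2 + (m - M) ≤ dist p q ^ 2 := by
    rw [hz, hxeq]; linarith
  have hdxsq : (2 * γ) ^ 2 ≤ dist (∑ i, a i • xf i) (∑ i, b i • xf i) ^ 2 := by
    have h0 : (0:ℝ) ≤ 2 * γ := by linarith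
    nlinarith [hsepx]
  have hdsq : 4 * γ ^ 2 + (m - M) ≤ dist p q ^ 2 := by nlinarith
  have h2γ' : 2 * (Real.sqrt (4 * γ ^ 2 + (m - M)) / 2) =
      Real.sqrt (4 * γ ^ 2 + (m - M)) := by ring
  rw [h2γ']
  calc Real.sqrt (4 * γ ^ 2 + (m - M)) ≤ Real.sqrt (dist p q ^ 2) :=
        Real.sqrt_le_sqrt hdsq
    _ = dist p q := Real.sqrt_sq dist_nonneg

end AuxMargin


/-- Let `(G₁, y₁), …, (G_s, y_s)` be a graph sample that is linearly
separable in the 1-WLOA feature space with margin `γ` (the distance between the convex hulls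
of the two classes is at least `2γ`).  If the minimum increase of squared distances between
the classes, when passing from the 1-WLOA to the 1-WLOA_𝓕 feature vectors, strictly exceeds
the maximum increase of squared distances within the classes, then the sample is linearly
separable in the 1-WLOA_𝓕 feature space with margin strictly larger than `γ`. -/
theorem wloaF_margin_increase (n T s : ℕ) (FF : Finset FinGraph)
    (Gs : Fin s → SimpleGraph (Fin n)) (y : Fin s → Bool) (γ : ℝ) (hγ : 0 < γ)
    (hsep : ∀ p ∈ convexHull ℝ ((fun i => featWLOA n T (Gs i)) '' {i | y i = true}),
      ∀ q ∈ convexHull ℝ ((fun i => featWLOA n T (Gs i)) '' {i | y i = false}),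
      2 * γ ≤ dist p q)
    (hcond : ∀ i j k l : Fin s, y i ≠ y j → y k = y l →
      dist (featWLOAF n FF T (Gs k)) (featWLOAF n FF T (Gs l)) ^ 2 -
          dist (featWLOA n T (Gs k)) (featWLOA n T (Gs l)) ^ 2 <
        dist (featWLOAF n FF T (Gs i)) (featWLOAF n FF T (Gs j)) ^ 2 -
          dist (featWLOA n T (Gs i)) (featWLOA n T (Gs j)) ^ 2) :
    ∃ γ' : ℝ, γ < γ' ∧
      ∀ p ∈ convexHull ℝ ((fun i => featWLOAF n FF T (Gs i)) '' {i | y i = true}),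
        ∀ q ∈ convexHull ℝ ((fun i => featWLOAF n FF T (Gs i)) '' {i | y i = false}),
        2 * γ' ≤ dist p q := by
  exact core_margin s (fun i => featWLOA n T (Gs i))
    (fun i => featWLOAF n FF T (Gs i)) y γ hγ hsep hcond

end
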